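/- Let S be a metric semigroup and let π be a tight Borel probability measure on S. Then there exists a linear contractive projection P : LUC(S) → LUC(S) (i.e. P ∘ P = P and ‖P(f)‖_∞ ≤ ‖f‖_∞ for all f) whose range equals H_π(S), and which commutes with left translations: P(δ_a * f) = δ_a * P(f) for all a ∈ S and f ∈ LUC(S). -/

import Mathlib

set_option linter.unusedSectionVars false


open MeasureTheory BoundedContinuousFunction Filter Topology
open scoped ENNReal

/-- The left translate `δ_a * f` of a bounded continuous function `f`,
`(δ_a * f)(x) = f (a * x)`. -/
noncomputable def lTrans {S : Type*} [Semigroup S] [MetricSpace S] [ContinuousMul S]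
    (a : S) (f : S →ᵇ ℂ) : S →ᵇ ℂ :=
  f.compContinuous ⟨fun x => a * x, continuous_const.mul continuous_id⟩

/-- `LUC S` is the space of bounded (left) uniformly continuous functions on `S`. -/
noncomputable def LUC (S : Type*) [Semigroup S] [MetricSpace S] [ContinuousMul S] :
    Submodule ℂ (S →ᵇ ℂ) where
  carrier := {f | Continuous fun a : S => lTrans a f}
  add_mem' := by
    intro f g hf hg
    show Continuous fun a : S => lTrans a (f + g)
    have h : (fun a : S => lTrans a (f + g)) = fun a : S => lTrans a f + lTrans a g := by
      funext a; ext x; simp [lTrans]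
    rw [h]; exact hf.add hg
  zero_mem' := by
    show Continuous fun a : S => lTrans a (0 : S →ᵇ ℂ)
    have h : (fun a : S => lTrans a (0 : S →ᵇ ℂ)) = fun _ => (0 : S →ᵇ ℂ) := by
      funext a; ext x; simp [lTrans]
    rw [h]; exact continuous_const
  smul_mem' := by
    intro c f hf
    show Continuous fun a : S => lTrans a (c • f)
    have h : (fun a : S => lTrans a (c • f)) = fun a : S => c • lTrans a f := by
      funext a; ext x; simp [lTrans]
    rw [h]; exact hf.const_smul c

/-- The left translate `δ_a * f` of an element of `LUC S`, as an element of `LUC S`. -/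
noncomputable def lTransL {S : Type*} [Semigroup S] [MetricSpace S] [ContinuousMul S]
    (a : S) (f : LUC S) : LUC S :=
  ⟨lTrans a f.1, by
    show Continuous fun b : S => lTrans b (lTrans a f.1)
    have h : (fun b : S => lTrans b (lTrans a f.1)) = fun b : S => lTrans (a * b) f.1 := by
      funext b; ext x; simp [lTrans, mul_assoc]
    rw [h]; exact f.2.comp (continuous_mul_left a)⟩

namespace HarmonicProj
variable {S : Type*} [Semigroup S] [MetricSpace S] [ContinuousMul S]

lemma lTrans_apply (a : S) (f : S →ᵇ ℂ) (x : S) : lTrans a f x = f (a * x) := rfl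
lemma norm_lTrans_le (a : S) (f : S →ᵇ ℂ) : ‖lTrans a f‖ ≤ ‖f‖ := by
  refine (norm_le (norm_nonneg f)).2 fun x => ?_
  exact f.norm_coe_le_norm (a * x)
lemma lTrans_sub (a : S) (f g : S →ᵇ ℂ) : lTrans a (f - g) = lTrans a f - lTrans a g := by
  ext x; simp [lTrans_apply]
lemma lTrans_mul (a x : S) (f : S →ᵇ ℂ) : lTrans (a * x) f = lTrans x (lTrans a f) := by
  ext y; simp [lTrans_apply, mul_assoc]
lemma dist_lTrans_le (a : S) (f g : S →ᵇ ℂ) : dist (lTrans a f) (lTrans a g) ≤ dist f g := by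
  rw [dist_eq_norm, dist_eq_norm, ← lTrans_sub]; exact norm_lTrans_le a (f - g)
lemma continuous_of_osc {α E : Type*} [TopologicalSpace α] [SeminormedAddCommGroup E]
    {F : α → E} {ω : α → α → ℝ}
    (hω : ∀ a, Tendsto (fun b => ω a b) (𝓝 a) (𝓝 0))
    (h : ∀ a b, ‖F a - F b‖ ≤ ω a b) : Continuous F := by
  rw [continuous_iff_continuousAt]
  intro a
  rw [ContinuousAt, tendsto_iff_dist_tendsto_zero]
  refine squeeze_zero (fun b => dist_nonneg) (fun b => ?_) (hω a)
  rw [dist_eq_norm, norm_sub_rev]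
  exact h a b

/-- elements of LUC S : membership unfolding -/
lemma luc_cont (f : LUC S) : Continuous fun a : S => lTrans a (f : S →ᵇ ℂ) := f.2

variable [MeasurableSpace S] [BorelSpace S] (π : Measure S) [IsProbabilityMeasure π]

/-- the integration functional -/
noncomputable def I (g : S →ᵇ ℂ) : ℂ := ∫ y, g y ∂π

lemma norm_I_le (g : S →ᵇ ℂ) : ‖I π g‖ ≤ ‖g‖ := by
  have := g.norm_integral_le_mul_norm π
  simpa [I] using this

lemma I_sub (g h : S →ᵇ ℂ) : I π (g - h) = I π g - I π h := by
  simp only [I, coe_sub, Pi.sub_apply]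
  exact integral_sub (g.integrable π) (h.integrable π)

lemma dist_I_le (g h : S →ᵇ ℂ) : dist (I π g) (I π h) ≤ dist g h := by
  rw [dist_eq_norm, dist_eq_norm, ← I_sub]
  exact norm_I_le π (g - h)

/-- the one-step convolution operator on LUC -/
noncomputable def Top (f : LUC S) : LUC S := by
  refine ⟨BoundedContinuousFunction.ofNormedAddCommGroup
    (fun x => I π (lTrans x (f : S →ᵇ ℂ))) ?_ ‖(f : S →ᵇ ℂ)‖ ?_, ?_⟩
  · have hI : LipschitzWith 1 (I π) :=
      LipschitzWith.of_dist_le_mul fun g h => by simpa using dist_I_le π g h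
    exact hI.continuous.comp (luc_cont f)
  · exact fun x => (norm_I_le π _).trans (norm_lTrans_le x _)
  · -- membership in LUC
    show Continuous fun a : S => lTrans a _
    refine continuous_of_osc
      (ω := fun a b => ‖lTrans a (f : S →ᵇ ℂ) - lTrans b (f : S →ᵇ ℂ)‖) ?_ ?_
    · intro a
      have h1 : Tendsto (fun b : S => lTrans a (f : S →ᵇ ℂ) - lTrans b (f : S →ᵇ ℂ)) (𝓝 a)
          (𝓝 (lTrans a (f : S →ᵇ ℂ) - lTrans a (f : S →ᵇ ℂ))) :=
        tendsto_const_nhds.sub ((luc_cont f).tendsto a)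
      simpa using h1.norm
    · intro a b
      refine (norm_le (norm_nonneg _)).2 fun x => ?_
      show ‖I π (lTrans (a * x) (f : S →ᵇ ℂ)) - I π (lTrans (b * x) (f : S →ᵇ ℂ))‖ ≤ _
      rw [← I_sub, lTrans_mul, lTrans_mul, ← lTrans_sub]
      exact (norm_I_le π _).trans (norm_lTrans_le x _)

lemma Top_apply (f : LUC S) (x : S) :
    ((Top π f : LUC S) : S →ᵇ ℂ) x = ∫ y, (f : S →ᵇ ℂ) (x * y) ∂π := rfl


lemma lTrans_add (a : S) (f g : S →ᵇ ℂ) : lTrans a (f + g) = lTrans a f + lTrans a g := by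
  ext x; simp [lTrans_apply]

lemma lTrans_smul (a : S) (c : ℂ) (f : S →ᵇ ℂ) : lTrans a (c • f) = c • lTrans a f := by
  ext x; simp [lTrans_apply]

lemma I_add (g h : S →ᵇ ℂ) : I π (g + h) = I π g + I π h := by
  simp only [I, coe_add, Pi.add_apply]
  exact integral_add (g.integrable π) (h.integrable π)

lemma I_smul (c : ℂ) (g : S →ᵇ ℂ) : I π (c • g) = c * I π g := by
  simp only [I, coe_smul, smul_eq_mul]
  exact integral_const_mul c _

/-- translation inside LUC -/
lemma coe_lTransL (a : S) (f : LUC S) :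
    ((lTransL a f : LUC S) : S →ᵇ ℂ) = lTrans a (f : S →ᵇ ℂ) := rfl

lemma Top_lTransL (a : S) (f : LUC S) :
    lTransL a (Top π f) = Top π (lTransL a f) := by
  apply Subtype.ext
  ext x
  show ((Top π f : LUC S) : S →ᵇ ℂ) (a * x) = I π (lTrans x (lTrans a (f : S →ᵇ ℂ)))
  show I π (lTrans (a * x) (f : S →ᵇ ℂ)) = I π (lTrans x (lTrans a (f : S →ᵇ ℂ)))
  rw [lTrans_mul]

lemma Top_add (f g : LUC S) : Top π (f + g) = Top π f + Top π g := by
  apply Subtype.ext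
  ext x
  show I π (lTrans x ((f : S →ᵇ ℂ) + (g : S →ᵇ ℂ))) = _
  rw [lTrans_add, I_add]
  rfl

lemma Top_smul (c : ℂ) (f : LUC S) : Top π (c • f) = c • Top π f := by
  apply Subtype.ext
  ext x
  show I π (lTrans x (c • (f : S →ᵇ ℂ))) = _
  rw [lTrans_smul, I_smul]
  rfl

lemma Top_sub (f g : LUC S) : Top π (f - g) = Top π f - Top π g := by
  apply Subtype.ext
  ext x
  show I π (lTrans x ((f : S →ᵇ ℂ) - (g : S →ᵇ ℂ))) = _
  rw [lTrans_sub, I_sub]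
  rfl

lemma Top_norm_le (f : LUC S) : ‖(Top π f : LUC S)‖ ≤ ‖f‖ := by
  refine (norm_le (norm_nonneg _)).2 fun x => ?_
  exact (norm_I_le π _).trans (norm_lTrans_le x _)

lemma Top_osc (f : LUC S) (u v : S) :
    ‖((Top π f : LUC S) : S →ᵇ ℂ) u - ((Top π f : LUC S) : S →ᵇ ℂ) v‖ ≤
      ‖lTrans u (f : S →ᵇ ℂ) - lTrans v (f : S →ᵇ ℂ)‖ := by
  show ‖I π (lTrans u (f : S →ᵇ ℂ)) - I π (lTrans v (f : S →ᵇ ℂ))‖ ≤ _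
  rw [← I_sub]
  exact norm_I_le π _

/-- iterated convolution -/
noncomputable def Tk (k : ℕ) (f : LUC S) : LUC S := (Top π)^[k] f

lemma Tk_zero (f : LUC S) : Tk π 0 f = f := rfl

lemma Tk_succ (k : ℕ) (f : LUC S) : Tk π (k + 1) f = Top π (Tk π k f) :=
  Function.iterate_succ_apply' _ _ _

lemma Tk_lTransL (k : ℕ) (a : S) (f : LUC S) :
    lTransL a (Tk π k f) = Tk π k (lTransL a f) := by
  induction k with
  | zero => rfl
  | succ k ih => rw [Tk_succ, Tk_succ, Top_lTransL, ih]

lemma Tk_sub (k : ℕ) (f g : LUC S) : Tk π k (f - g) = Tk π k f - Tk π k g := by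
  induction k with
  | zero => rfl
  | succ k ih => rw [Tk_succ, Tk_succ, Tk_succ, ih, Top_sub]

lemma Tk_add (k : ℕ) (f g : LUC S) : Tk π k (f + g) = Tk π k f + Tk π k g := by
  induction k with
  | zero => rfl
  | succ k ih => rw [Tk_succ, Tk_succ, Tk_succ, ih, Top_add]

lemma Tk_smul (k : ℕ) (c : ℂ) (f : LUC S) : Tk π k (c • f) = c • Tk π k f := by
  induction k with
  | zero => rfl
  | succ k ih => rw [Tk_succ, Tk_succ, ih, Top_smul]

lemma Tk_norm_le (k : ℕ) (f : LUC S) : ‖(Tk π k f : LUC S)‖ ≤ ‖f‖ := by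
  induction k with
  | zero => exact le_rfl
  | succ k ih => rw [Tk_succ]; exact (Top_norm_le π _).trans ih

lemma Tk_osc (k : ℕ) (f : LUC S) (u v : S) :
    ‖((Tk π k f : LUC S) : S →ᵇ ℂ) u - ((Tk π k f : LUC S) : S →ᵇ ℂ) v‖ ≤
      ‖(f : S →ᵇ ℂ) u - (f : S →ᵇ ℂ) v‖ +
        ‖lTrans u (f : S →ᵇ ℂ) - lTrans v (f : S →ᵇ ℂ)‖ := by
  match k with
  | 0 =>
    exact le_add_of_le_of_nonneg le_rfl (norm_nonneg _)
  | k + 1 =>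
    rw [Tk_succ]
    refine le_add_of_nonneg_of_le (norm_nonneg _) ?_
    refine (Top_osc π _ u v).trans ?_
    have h1 : lTrans u ((Tk π k f : LUC S) : S →ᵇ ℂ) - lTrans v ((Tk π k f : LUC S) : S →ᵇ ℂ)
        = ((Tk π k (lTransL u f - lTransL v f) : LUC S) : S →ᵇ ℂ) := by
      rw [Tk_sub]
      show _ = ((Tk π k (lTransL u f) : LUC S) : S →ᵇ ℂ) - ((Tk π k (lTransL v f) : LUC S) : S →ᵇ ℂ)
      rw [← Tk_lTransL, ← Tk_lTransL, coe_lTransL, coe_lTransL]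
    rw [h1]
    exact Tk_norm_le π k _

/-- Cesàro averages -/
noncomputable def An (n : ℕ) (f : LUC S) : LUC S :=
  (((n : ℂ) + 1)⁻¹) • ∑ k ∈ Finset.range (n + 1), Tk π k f

lemma An_apply (n : ℕ) (f : LUC S) (x : S) :
    ((An π n f : LUC S) : S →ᵇ ℂ) x =
      ((n : ℂ) + 1)⁻¹ * ∑ k ∈ Finset.range (n + 1), ((Tk π k f : LUC S) : S →ᵇ ℂ) x := by
  have h1 : ((An π n f : LUC S) : S →ᵇ ℂ) =
      ((n : ℂ) + 1)⁻¹ • ∑ k ∈ Finset.range (n + 1), ((Tk π k f : LUC S) : S →ᵇ ℂ) := by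
    simp [An]
  rw [h1]
  simp [Finset.sum_apply]

lemma natc_ne (n : ℕ) : ((n : ℂ) + 1) ≠ 0 := by
  exact_mod_cast Nat.cast_add_one_ne_zero (R := ℂ) n

lemma norm_natc (n : ℕ) : ‖((n : ℂ) + 1)⁻¹‖ = ((n : ℝ) + 1)⁻¹ := by
  rw [norm_inv]
  congr 1
  have : ((n : ℂ) + 1) = ((n + 1 : ℕ) : ℂ) := by push_cast; ring
  rw [this, Complex.norm_natCast]
  push_cast; ring

lemma An_norm (n : ℕ) (f : LUC S) (x : S) :
    ‖((An π n f : LUC S) : S →ᵇ ℂ) x‖ ≤ ‖f‖ := by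
  rw [An_apply, norm_mul, norm_natc]
  have h2 : ‖∑ k ∈ Finset.range (n + 1), ((Tk π k f : LUC S) : S →ᵇ ℂ) x‖ ≤
      (n + 1 : ℝ) * ‖f‖ := by
    refine (norm_sum_le _ _).trans ?_
    have : ∀ k ∈ Finset.range (n + 1), ‖((Tk π k f : LUC S) : S →ᵇ ℂ) x‖ ≤ ‖f‖ := fun k _ =>
      (norm_coe_le_norm _ x).trans (Tk_norm_le π k f)
    calc ∑ k ∈ Finset.range (n + 1), ‖((Tk π k f : LUC S) : S →ᵇ ℂ) x‖
        ≤ ∑ _k ∈ Finset.range (n + 1), ‖f‖ := Finset.sum_le_sum this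
      _ = (n + 1 : ℝ) * ‖f‖ := by
        rw [Finset.sum_const, Finset.card_range, nsmul_eq_mul, Nat.cast_add, Nat.cast_one]
  calc ((n : ℝ) + 1)⁻¹ * ‖∑ k ∈ Finset.range (n + 1), ((Tk π k f : LUC S) : S →ᵇ ℂ) x‖
      ≤ ((n : ℝ) + 1)⁻¹ * ((n + 1 : ℝ) * ‖f‖) := by
        refine mul_le_mul_of_nonneg_left h2 (by positivity)
    _ = ‖f‖ := by
        rw [← mul_assoc, inv_mul_cancel₀ (by positivity), one_mul]

lemma An_osc (n : ℕ) (f : LUC S) (u v : S) :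
    ‖((An π n f : LUC S) : S →ᵇ ℂ) u - ((An π n f : LUC S) : S →ᵇ ℂ) v‖ ≤
      ‖(f : S →ᵇ ℂ) u - (f : S →ᵇ ℂ) v‖ +
        ‖lTrans u (f : S →ᵇ ℂ) - lTrans v (f : S →ᵇ ℂ)‖ := by
  set ω := ‖(f : S →ᵇ ℂ) u - (f : S →ᵇ ℂ) v‖ +
    ‖lTrans u (f : S →ᵇ ℂ) - lTrans v (f : S →ᵇ ℂ)‖ with hω
  rw [An_apply, An_apply, ← mul_sub, norm_mul, norm_natc, ← Finset.sum_sub_distrib]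
  have h2 : ‖∑ k ∈ Finset.range (n + 1),
      (((Tk π k f : LUC S) : S →ᵇ ℂ) u - ((Tk π k f : LUC S) : S →ᵇ ℂ) v)‖ ≤
      (n + 1 : ℝ) * ω := by
    refine (norm_sum_le _ _).trans ?_
    calc ∑ k ∈ Finset.range (n + 1),
          ‖((Tk π k f : LUC S) : S →ᵇ ℂ) u - ((Tk π k f : LUC S) : S →ᵇ ℂ) v‖
        ≤ ∑ _k ∈ Finset.range (n + 1), ω := Finset.sum_le_sum fun k _ => Tk_osc π k f u v
      _ = (n + 1 : ℝ) * ω := by simp [Finset.sum_const, mul_comm]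
  calc ((n : ℝ) + 1)⁻¹ * ‖∑ k ∈ Finset.range (n + 1),
        (((Tk π k f : LUC S) : S →ᵇ ℂ) u - ((Tk π k f : LUC S) : S →ᵇ ℂ) v)‖
      ≤ ((n : ℝ) + 1)⁻¹ * ((n + 1 : ℝ) * ω) := mul_le_mul_of_nonneg_left h2 (by positivity)
    _ = ω := by rw [← mul_assoc, inv_mul_cancel₀ (by positivity), one_mul]

lemma An_lTransL (n : ℕ) (a : S) (f : LUC S) :
    lTransL a (An π n f) = An π n (lTransL a f) := by
  apply Subtype.ext
  show lTrans a ((An π n f : LUC S) : S →ᵇ ℂ) = _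
  ext x
  rw [lTrans_apply, An_apply, An_apply]
  congr 1
  refine Finset.sum_congr rfl fun k _ => ?_
  rw [← Tk_lTransL]
  rfl

lemma An_sub (n : ℕ) (f g : LUC S) : An π n (f - g) = An π n f - An π n g := by
  unfold An
  have h : ∑ k ∈ Finset.range (n + 1), Tk π k (f - g)
      = ∑ k ∈ Finset.range (n + 1), Tk π k f - ∑ k ∈ Finset.range (n + 1), Tk π k g := by
    rw [← Finset.sum_sub_distrib]
    exact Finset.sum_congr rfl fun k _ => Tk_sub π k f g
  rw [h, smul_sub]

lemma An_add (n : ℕ) (f g : LUC S) : An π n (f + g) = An π n f + An π n g := by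
  unfold An
  rw [← smul_add, ← Finset.sum_add_distrib]
  congr 1
  exact Finset.sum_congr rfl fun k _ => Tk_add π k f g

lemma An_smul (n : ℕ) (c : ℂ) (f : LUC S) : An π n (c • f) = c • An π n f := by
  unfold An
  rw [smul_comm]
  congr 1
  rw [Finset.smul_sum]
  exact Finset.sum_congr rfl fun k _ => Tk_smul π k c f

lemma Top_sum {ι : Type*} (s : Finset ι) (F : ι → LUC S) :
    Top π (∑ i ∈ s, F i) = ∑ i ∈ s, Top π (F i) := by
  classical
  induction s using Finset.induction with
  | empty =>
    apply Subtype.ext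
    ext x
    show I π (lTrans x ((0 : LUC S) : S →ᵇ ℂ)) = _
    have : lTrans x ((0 : LUC S) : S →ᵇ ℂ) = 0 := by ext y; simp [lTrans_apply]
    rw [this]
    simp [I]
  | insert a s hne ih =>
    rw [Finset.sum_insert hne, Finset.sum_insert hne, Top_add, ih]

lemma Top_An (n : ℕ) (f : LUC S) :
    Top π (An π n f) = An π n f + ((n : ℂ) + 1)⁻¹ • (Tk π (n + 1) f - f) := by
  unfold An
  rw [Top_smul, Top_sum]
  have h1 : ∑ k ∈ Finset.range (n + 1), Top π (Tk π k f)
      = ∑ k ∈ Finset.range (n + 1), Tk π (k + 1) f := by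
    exact Finset.sum_congr rfl fun k _ => (Tk_succ π k f).symm
  have h2 : ∑ k ∈ Finset.range (n + 1), Tk π (k + 1) f
      = ∑ k ∈ Finset.range (n + 1), Tk π k f + (Tk π (n + 1) f - Tk π 0 f) := by
    have h3 := Finset.sum_range_succ' (fun k => Tk π k f) (n + 1)
    have h4 := Finset.sum_range_succ (fun k => Tk π k f) (n + 1)
    -- h3 : ∑_{range (n+2)} = ∑_{k ∈ range (n+1)} Tk (k+1) f + Tk 0 f
    -- h4 : ∑_{range (n+2)} = ∑_{range (n+1)} + Tk (n+1) f
    have h5 := eq_sub_of_add_eq (h3.symm.trans h4)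
    rw [h5]
    abel
  rw [h1, h2, smul_add]
  rfl

/-- a fixed ultrafilter extending `atTop` on `ℕ` -/
noncomputable def UU : Ultrafilter ℕ := Ultrafilter.of atTop

lemma UU_le : (UU : Filter ℕ) ≤ atTop := Ultrafilter.of_le _

lemma exists_ulim {c : ℕ → ℂ} {R : ℝ} (h : ∀ n, ‖c n‖ ≤ R) :
    ∃ z : ℂ, Tendsto c (UU : Filter ℕ) (𝓝 z) := by
  have hmem : (UU.map c : Filter ℂ) ≤ 𝓟 (Metric.closedBall 0 R) := by
    rw [le_principal_iff]
    have : c ⁻¹' Metric.closedBall 0 R = Set.univ := by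
      ext n
      simp only [Set.mem_preimage, Metric.mem_closedBall, Set.mem_univ, iff_true,
        dist_zero_right]
      exact h n
    rw [Ultrafilter.coe_map, mem_map, this]
    exact Filter.univ_mem
  obtain ⟨z, _, hz⟩ := (isCompact_closedBall (0 : ℂ) R).ultrafilter_le_nhds (UU.map c) hmem
  exact ⟨z, hz⟩

/-- the projection, defined pointwise as an ultrafilter limit of Cesàro averages -/
noncomputable def Pfun (f : LUC S) : S → ℂ :=
  fun x => limUnder (UU : Filter ℕ) (fun n => ((An π n f : LUC S) : S →ᵇ ℂ) x)

lemma Pfun_tendsto (f : LUC S) (x : S) :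
    Tendsto (fun n => ((An π n f : LUC S) : S →ᵇ ℂ) x) (UU : Filter ℕ) (𝓝 (Pfun π f x)) :=
  tendsto_nhds_limUnder (exists_ulim fun n => An_norm π n f x)

lemma Pfun_norm (f : LUC S) (x : S) : ‖Pfun π f x‖ ≤ ‖f‖ :=
  le_of_tendsto (Pfun_tendsto π f x).norm (Eventually.of_forall fun n => An_norm π n f x)

lemma Pfun_osc (f : LUC S) (u v : S) :
    ‖Pfun π f u - Pfun π f v‖ ≤
      ‖(f : S →ᵇ ℂ) u - (f : S →ᵇ ℂ) v‖ +
        ‖lTrans u (f : S →ᵇ ℂ) - lTrans v (f : S →ᵇ ℂ)‖ :=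
  le_of_tendsto ((Pfun_tendsto π f u).sub (Pfun_tendsto π f v)).norm
    (Eventually.of_forall fun n => An_osc π n f u v)

lemma Pfun_lTrans (a : S) (f : LUC S) (x : S) :
    Pfun π f (a * x) = Pfun π (lTransL a f) x := by
  unfold Pfun
  congr 1
  funext n
  rw [← An_lTransL]
  rfl

lemma Pfun_sub (f g : LUC S) (x : S) :
    Pfun π (f - g) x = Pfun π f x - Pfun π g x := by
  refine tendsto_nhds_unique (Pfun_tendsto π (f - g) x) ?_
  have h := (Pfun_tendsto π f x).sub (Pfun_tendsto π g x)
  refine h.congr fun n => ?_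
  rw [An_sub]
  rfl

lemma Pfun_add (f g : LUC S) (x : S) :
    Pfun π (f + g) x = Pfun π f x + Pfun π g x := by
  refine tendsto_nhds_unique (Pfun_tendsto π (f + g) x) ?_
  refine ((Pfun_tendsto π f x).add (Pfun_tendsto π g x)).congr fun n => ?_
  rw [An_add]
  rfl

lemma Pfun_smul (c : ℂ) (f : LUC S) (x : S) :
    Pfun π (c • f) x = c * Pfun π f x := by
  refine tendsto_nhds_unique (Pfun_tendsto π (c • f) x) ?_
  refine ((Pfun_tendsto π f x).const_mul c).congr fun n => ?_
  rw [An_smul]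
  rfl

lemma Pfun_dist (f g : LUC S) (x : S) :
    ‖Pfun π f x - Pfun π g x‖ ≤ ‖((f : S →ᵇ ℂ)) - ((g : S →ᵇ ℂ))‖ := by
  rw [← Pfun_sub]
  have : ‖((f - g : LUC S) : S →ᵇ ℂ)‖ = ‖(f : S →ᵇ ℂ) - (g : S →ᵇ ℂ)‖ := rfl
  rw [← this]
  exact Pfun_norm π (f - g) x

lemma omega_tendsto (f : LUC S) (u : S) :
    Tendsto (fun v => ‖(f : S →ᵇ ℂ) u - (f : S →ᵇ ℂ) v‖ +
      ‖lTrans u (f : S →ᵇ ℂ) - lTrans v (f : S →ᵇ ℂ)‖) (𝓝 u) (𝓝 0) := by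
  have h1 : Tendsto (fun v => ‖(f : S →ᵇ ℂ) u - (f : S →ᵇ ℂ) v‖) (𝓝 u)
      (𝓝 ‖(f : S →ᵇ ℂ) u - (f : S →ᵇ ℂ) u‖) :=
    (tendsto_const_nhds.sub ((f : S →ᵇ ℂ).continuous.tendsto u)).norm
  have h2 : Tendsto (fun v => ‖lTrans u (f : S →ᵇ ℂ) - lTrans v (f : S →ᵇ ℂ)‖) (𝓝 u)
      (𝓝 ‖lTrans u (f : S →ᵇ ℂ) - lTrans u (f : S →ᵇ ℂ)‖) :=
    (tendsto_const_nhds.sub ((luc_cont f).tendsto u)).norm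
  have := h1.add h2
  simpa using this

/-- the projection, as a bounded continuous function -/
noncomputable def Pb (f : LUC S) : S →ᵇ ℂ := by
  refine BoundedContinuousFunction.ofNormedAddCommGroup (Pfun π f) ?_ ‖f‖ (Pfun_norm π f)
  exact continuous_of_osc (F := Pfun π f) (omega_tendsto f) (Pfun_osc π f)

lemma Pb_apply (f : LUC S) (x : S) : Pb π f x = Pfun π f x := rfl

lemma lTrans_Pb (a : S) (f : LUC S) : lTrans a (Pb π f) = Pb π (lTransL a f) := by
  ext x
  rw [lTrans_apply, Pb_apply, Pb_apply, Pfun_lTrans]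

lemma Pb_mem (f : LUC S) : Pb π f ∈ LUC S := by
  show Continuous fun a : S => lTrans a (Pb π f)
  have heq : (fun a : S => lTrans a (Pb π f)) = fun a : S => Pb π (lTransL a f) := by
    funext a; exact lTrans_Pb π a f
  rw [heq]
  refine continuous_of_osc
    (ω := fun a b => ‖lTrans a (f : S →ᵇ ℂ) - lTrans b (f : S →ᵇ ℂ)‖) ?_ ?_
  · intro a
    have h2 : Tendsto (fun b => ‖lTrans a (f : S →ᵇ ℂ) - lTrans b (f : S →ᵇ ℂ)‖) (𝓝 a)
        (𝓝 ‖lTrans a (f : S →ᵇ ℂ) - lTrans a (f : S →ᵇ ℂ)‖) :=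
      (tendsto_const_nhds.sub ((luc_cont f).tendsto a)).norm
    simpa using h2
  · intro a b
    refine (norm_le (norm_nonneg _)).2 fun x => ?_
    show ‖Pfun π (lTransL a f) x - Pfun π (lTransL b f) x‖ ≤ _
    exact Pfun_dist π (lTransL a f) (lTransL b f) x

/-- the projection, as a map `LUC S → LUC S` -/
noncomputable def PL (f : LUC S) : LUC S := ⟨Pb π f, Pb_mem π f⟩

lemma integral_An (n : ℕ) (f : LUC S) (x : S) :
    ∫ z, ((An π n f : LUC S) : S →ᵇ ℂ) (x * z) ∂π =
      ((An π n f : LUC S) : S →ᵇ ℂ) x +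
        ((n : ℂ) + 1)⁻¹ * (((Tk π (n + 1) f : LUC S) : S →ᵇ ℂ) x - (f : S →ᵇ ℂ) x) := by
  have h1 : ∫ z, ((An π n f : LUC S) : S →ᵇ ℂ) (x * z) ∂π
      = ((Top π (An π n f) : LUC S) : S →ᵇ ℂ) x := (Top_apply π (An π n f) x).symm
  rw [h1, Top_An]
  rfl

lemma recursion_tendsto (f : LUC S) (x : S) :
    Tendsto (fun n => ∫ z, ((An π n f : LUC S) : S →ᵇ ℂ) (x * z) ∂π)
      (UU : Filter ℕ) (𝓝 (Pfun π f x)) := by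
  have heq : (fun n => ∫ z, ((An π n f : LUC S) : S →ᵇ ℂ) (x * z) ∂π)
      = fun n => ((An π n f : LUC S) : S →ᵇ ℂ) x +
          ((n : ℂ) + 1)⁻¹ * (((Tk π (n + 1) f : LUC S) : S →ᵇ ℂ) x - (f : S →ᵇ ℂ) x) := by
    funext n; exact integral_An π n f x
  rw [heq]
  have hcorr : Tendsto (fun n : ℕ =>
      ((n : ℂ) + 1)⁻¹ * (((Tk π (n + 1) f : LUC S) : S →ᵇ ℂ) x - (f : S →ᵇ ℂ) x))
      atTop (𝓝 0) := by
    apply squeeze_zero_norm (a := fun n : ℕ => (1 / ((n : ℝ) + 1)) * (2 * ‖f‖))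
    · intro n
      rw [norm_mul, norm_natc, one_div]
      refine mul_le_mul_of_nonneg_left ?_ (by positivity)
      refine (norm_sub_le _ _).trans ?_
      have hb1 : ‖((Tk π (n + 1) f : LUC S) : S →ᵇ ℂ) x‖ ≤ ‖f‖ :=
        (norm_coe_le_norm _ x).trans (Tk_norm_le π (n + 1) f)
      have hb2 : ‖(f : S →ᵇ ℂ) x‖ ≤ ‖f‖ := norm_coe_le_norm _ x
      linarith
    · have := tendsto_one_div_add_atTop_nhds_zero_nat.mul_const (2 * ‖f‖)
      rw [zero_mul] at this
      exact this
  have h2 := (Pfun_tendsto π f x).add (hcorr.mono_left UU_le)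
  simpa using h2

lemma swap_tendsto
    (htight : ∀ ε : ℝ≥0∞, 0 < ε → ∃ K : Set S, IsCompact K ∧ π Kᶜ < ε)
    (f : LUC S) (x : S) :
    Tendsto (fun n => ∫ z, ((An π n f : LUC S) : S →ᵇ ℂ) (x * z) ∂π)
      (UU : Filter ℕ) (𝓝 (∫ z, Pfun π f (x * z) ∂π)) := by
  rw [Metric.tendsto_nhds]
  intro ε hε
  set M : ℝ := ‖f‖ + 1 with hM
  have hM0 : (0 : ℝ) < M := by positivity
  have hfM : ‖f‖ ≤ M := by linarith
  obtain ⟨K, hK, hKm⟩ := htight (ENNReal.ofReal (ε / (8 * M)))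
    (ENNReal.ofReal_pos.2 (by positivity))
  set η : ℝ := ε / 8 with hη
  have hη0 : 0 < η := by positivity
  set Ω : S × S → ℝ := fun p =>
    ‖(f : S →ᵇ ℂ) (x * p.1) - (f : S →ᵇ ℂ) (x * p.2)‖ +
      ‖lTrans (x * p.1) (f : S →ᵇ ℂ) - lTrans (x * p.2) (f : S →ᵇ ℂ)‖ with hΩdef
  have hΩcont : Continuous Ω := by
    have c1 : Continuous fun p : S × S => x * p.1 := continuous_const.mul continuous_fst
    have c2 : Continuous fun p : S × S => x * p.2 := continuous_const.mul continuous_snd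
    exact (((f : S →ᵇ ℂ).continuous.comp c1).sub
        ((f : S →ᵇ ℂ).continuous.comp c2)).norm.add
      (((luc_cont f).comp c1).sub ((luc_cont f).comp c2)).norm
  have hΩnonneg : ∀ p, 0 ≤ Ω p := fun p => add_nonneg (norm_nonneg _) (norm_nonneg _)
  have hUC := (hK.prod hK).uniformContinuousOn_of_continuous hΩcont.continuousOn
  rw [Metric.uniformContinuousOn_iff] at hUC
  obtain ⟨δ, hδ0, hδ⟩ := hUC η hη0
  have hΩbound : ∀ z ∈ K, ∀ z' ∈ K, dist z z' < δ → Ω (z, z') < η := by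
    intro z hz z' hz' hd
    have hmem1 : (z, z') ∈ K ×ˢ K := Set.mk_mem_prod hz hz'
    have hmem2 : (z, z) ∈ K ×ˢ K := Set.mk_mem_prod hz hz
    have hdist : dist ((z, z') : S × S) (z, z) < δ := by
      rw [Prod.dist_eq]
      simp only [dist_self]
      rw [max_eq_right dist_nonneg]
      rwa [dist_comm]
    have h1 := hδ (z, z') hmem1 (z, z) hmem2 hdist
    have hzz : Ω (z, z) = 0 := by simp [hΩdef]
    rw [Real.dist_eq, hzz, sub_zero] at h1
    exact lt_of_le_of_lt (le_abs_self _) h1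
  have hcov : K ⊆ ⋃ z ∈ K, Metric.ball z δ := fun z hz =>
    Set.mem_biUnion hz (Metric.mem_ball_self hδ0)
  obtain ⟨t, htK, htfin, htcov⟩ :=
    hK.elim_finite_subcover_image (fun z _ => Metric.isOpen_ball) hcov
  have hev : ∀ᶠ n in (UU : Filter ℕ), ∀ z ∈ t,
      ‖((An π n f : LUC S) : S →ᵇ ℂ) (x * z) - Pfun π f (x * z)‖ < η := by
    rw [eventually_all_finite htfin]
    intro z _
    have h2 := Metric.tendsto_nhds.1 (Pfun_tendsto π f (x * z)) η hη0
    refine h2.mono fun n hn => ?_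
    rwa [dist_eq_norm] at hn
  refine hev.mono fun n hn => ?_
  set gb : S →ᵇ ℂ := lTrans x ((An π n f : LUC S) : S →ᵇ ℂ) with hgbdef
  set hbf : S →ᵇ ℂ := lTrans x (Pb π f) with hhbdef
  have hgb_apply : ∀ z, gb z = ((An π n f : LUC S) : S →ᵇ ℂ) (x * z) := fun z => rfl
  have hhb_apply : ∀ z, hbf z = Pfun π f (x * z) := fun z => rfl
  have key : ∀ z ∈ K, ‖gb z - hbf z‖ ≤ 3 * η := by
    intro z hz
    obtain ⟨z₀, hz₀t, hzball⟩ := Set.mem_iUnion₂.1 (htcov hz)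
    have hz₀K : z₀ ∈ K := htK hz₀t
    have hd : dist z z₀ < δ := Metric.mem_ball.1 hzball
    have hΩ1 : Ω (z, z₀) < η := hΩbound z hz z₀ hz₀K hd
    have e1 : ‖gb z - gb z₀‖ ≤ Ω (z, z₀) := by
      rw [hgb_apply, hgb_apply]
      exact An_osc π n f (x * z) (x * z₀)
    have e2 : ‖hbf z₀ - hbf z‖ ≤ Ω (z, z₀) := by
      rw [hhb_apply, hhb_apply, norm_sub_rev]
      exact Pfun_osc π f (x * z) (x * z₀)
    have e3 : ‖gb z₀ - hbf z₀‖ < η := by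
      rw [hgb_apply, hhb_apply]
      exact hn z₀ hz₀t
    have e4 : gb z - hbf z = (gb z - gb z₀) + (gb z₀ - hbf z₀) + (hbf z₀ - hbf z) := by ring
    rw [e4]
    refine (norm_add₃_le).trans ?_
    linarith
  have keyC : ∀ z, ‖gb z - hbf z‖ ≤ 2 * M := by
    intro z
    refine (norm_sub_le _ _).trans ?_
    have b1 : ‖gb z‖ ≤ ‖f‖ := by rw [hgb_apply]; exact An_norm π n f (x * z)
    have b2 : ‖hbf z‖ ≤ ‖f‖ := by rw [hhb_apply]; exact Pfun_norm π f (x * z)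
    linarith
  have hint : Integrable (fun z => ‖gb z - hbf z‖) π := ((gb - hbf).integrable π).norm
  rw [dist_eq_norm]
  have h0 : (∫ z, ((An π n f : LUC S) : S →ᵇ ℂ) (x * z) ∂π) - ∫ z, Pfun π f (x * z) ∂π
      = ∫ z, (gb z - hbf z) ∂π := by
    rw [integral_sub (gb.integrable π) (hbf.integrable π)]
    rfl
  have hA : ∫ z in K, ‖gb z - hbf z‖ ∂π ≤ 3 * η * (π K).toReal := by
    have h3 := setIntegral_mono_on hint.integrableOn
      (integrableOn_const (measure_lt_top π K).ne) hK.measurableSet key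
    rwa [setIntegral_const, smul_eq_mul, mul_comm] at h3
  have hB : ∫ z in Kᶜ, ‖gb z - hbf z‖ ∂π ≤ 2 * M * (π Kᶜ).toReal := by
    have h3 := setIntegral_mono_on hint.integrableOn
      (integrableOn_const (measure_lt_top π Kᶜ).ne)
      hK.measurableSet.compl (fun z _ => keyC z)
    rwa [setIntegral_const, smul_eq_mul, mul_comm] at h3
  have hπK : (π K).toReal ≤ 1 := by
    refine ENNReal.toReal_le_of_le_ofReal one_pos.le ?_
    rw [ENNReal.ofReal_one]
    exact prob_le_one
  have hπKc : (π Kᶜ).toReal ≤ ε / (8 * M) := by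
    refine ENNReal.toReal_le_of_le_ofReal (by positivity) hKm.le
  have hπK0 : (0:ℝ) ≤ (π K).toReal := ENNReal.toReal_nonneg
  have hπKc0 : (0:ℝ) ≤ (π Kᶜ).toReal := ENNReal.toReal_nonneg
  calc ‖(∫ z, ((An π n f : LUC S) : S →ᵇ ℂ) (x * z) ∂π) - ∫ z, Pfun π f (x * z) ∂π‖
      = ‖∫ z, (gb z - hbf z) ∂π‖ := by rw [h0]
    _ ≤ ∫ z, ‖gb z - hbf z‖ ∂π := norm_integral_le_integral_norm _
    _ = (∫ z in K, ‖gb z - hbf z‖ ∂π) + ∫ z in Kᶜ, ‖gb z - hbf z‖ ∂π :=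
        (integral_add_compl hK.measurableSet hint).symm
    _ ≤ 3 * η * (π K).toReal + 2 * M * (π Kᶜ).toReal := add_le_add hA hB
    _ < ε := by
        have g1 : 3 * η * (π K).toReal ≤ 3 * η := by
          nlinarith
        have g2 : 2 * M * (π Kᶜ).toReal ≤ 2 * M * (ε / (8 * M)) :=
          mul_le_mul_of_nonneg_left hπKc (by positivity)
        have g3 : 2 * M * (ε / (8 * M)) = ε / 4 := by
          field_simp
          ring
        rw [g3] at g2
        have g4 : 3 * η * (π K).toReal + 2 * M * (π Kᶜ).toReal ≤ 3 * η + ε / 4 :=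
          add_le_add g1 g2
        have g5 : 3 * η + ε / 4 < ε := by rw [hη]; linarith
        exact lt_of_le_of_lt g4 g5

lemma harmonic_Pfun
    (htight : ∀ ε : ℝ≥0∞, 0 < ε → ∃ K : Set S, IsCompact K ∧ π Kᶜ < ε)
    (f : LUC S) (x : S) :
    ∫ z, Pfun π f (x * z) ∂π = Pfun π f x :=
  tendsto_nhds_unique (swap_tendsto π htight f x) (recursion_tendsto π f x)

lemma PL_of_harmonic (f : LUC S)
    (hf : ∀ x, ∫ y, (f : S →ᵇ ℂ) (x * y) ∂π = (f : S →ᵇ ℂ) x) :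
    PL π f = f := by
  have hTop : Top π f = f := by
    apply Subtype.ext
    ext x
    exact hf x
  have hTk : ∀ k, Tk π k f = f := by
    intro k
    induction k with
    | zero => rfl
    | succ k ih => rw [Tk_succ, ih, hTop]
  have hAn : ∀ n y, ((An π n f : LUC S) : S →ᵇ ℂ) y = (f : S →ᵇ ℂ) y := by
    intro n y
    rw [An_apply]
    have h1 : ∀ k ∈ Finset.range (n + 1),
        ((Tk π k f : LUC S) : S →ᵇ ℂ) y = (f : S →ᵇ ℂ) y := fun k _ => by rw [hTk k]
    rw [Finset.sum_congr rfl h1, Finset.sum_const, Finset.card_range, nsmul_eq_mul]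
    have h2 : ((n + 1 : ℕ) : ℂ) = (n : ℂ) + 1 := by push_cast; ring
    rw [← mul_assoc, h2, inv_mul_cancel₀ (natc_ne n), one_mul]
  apply Subtype.ext
  ext y
  show Pfun π f y = (f : S →ᵇ ℂ) y
  refine tendsto_nhds_unique (Pfun_tendsto π f y) ?_
  have h3 : (fun n => ((An π n f : LUC S) : S →ᵇ ℂ) y) = fun _ => (f : S →ᵇ ℂ) y :=
    funext fun n => hAn n y
  rw [h3]
  exact tendsto_const_nhds

/-- the projection as a linear map -/
noncomputable def Plin : LUC S →ₗ[ℂ] LUC S where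
  toFun := PL π
  map_add' := by
    intro f g
    apply Subtype.ext
    ext x
    show Pfun π (f + g) x = Pfun π f x + Pfun π g x
    exact Pfun_add π f g x
  map_smul' := by
    intro c f
    apply Subtype.ext
    ext x
    show Pfun π (c • f) x = c * Pfun π f x
    exact Pfun_smul π c f x

end HarmonicProj

open HarmonicProj


/-- **Existence of a contractive projection onto the harmonic functions.**
For a metric semigroup `S` and a tight Borel probability measure `π` on `S`, there is a
linear contractive projection `P : LUC S → LUC S` whose range is exactly the space
`H_π(S)` of `π`-harmonic functions in `LUC S`, and which commutes with left
translations. -/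
theorem exists_projection_onto_harmonic_functions
    {S : Type*} [Semigroup S] [MetricSpace S] [ContinuousMul S]
    [MeasurableSpace S] [BorelSpace S]
    (π : Measure S) [IsProbabilityMeasure π]
    (htight : ∀ ε : ℝ≥0∞, 0 < ε → ∃ K : Set S, IsCompact K ∧ π Kᶜ < ε) :
    ∃ P : LUC S →ₗ[ℂ] LUC S,
      (∀ f : LUC S, P (P f) = P f) ∧
      (∀ f : LUC S, ‖P f‖ ≤ ‖f‖) ∧
      (∀ f : LUC S, f ∈ LinearMap.range P ↔
        ∀ x : S, ∫ y, (f : S →ᵇ ℂ) (x * y) ∂π = (f : S →ᵇ ℂ) x) ∧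
      (∀ (a : S) (f : LUC S), P (lTransL a f) = lTransL a (P f)) := by
  refine ⟨Plin π, ?_, ?_, ?_, ?_⟩
  · intro f
    show PL π (PL π f) = PL π f
    exact PL_of_harmonic π (PL π f) (fun x => harmonic_Pfun π htight f x)
  · intro f
    show ‖(PL π f : LUC S)‖ ≤ ‖f‖
    exact (norm_le (norm_nonneg _)).2 (Pfun_norm π f)
  · intro f
    constructor
    · rintro ⟨g, rfl⟩
      intro x
      exact harmonic_Pfun π htight g x
    · intro hf
      exact ⟨f, PL_of_harmonic π f hf⟩
  · intro a f
    show PL π (lTransL a f) = lTransL a (PL π f)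
    apply Subtype.ext
    ext x
    show Pfun π (lTransL a f) x = Pfun π f (a * x)
    exact (Pfun_lTrans π a f x).symm
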